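/- Let q be a positive integer and π a q-dimensional probability vector. Then the spectral norm of diag(π) − π πᵀ is at most max_{j∈[q]} π_j. -/

import Mathlib

open scoped RealInnerProductSpace

lemma aux_norm_le {E : Type*} [NormedAddCommGroup E] [InnerProductSpace ℝ E]
    (T : E →L[ℝ] E) (hT : LinearMap.IsSymmetric (T : E →ₗ[ℝ] E)) {c : ℝ} (hc : 0 ≤ c)
    (h : ∀ x : E, |⟪T x, x⟫| ≤ c * ‖x‖ ^ 2) : ‖T‖ ≤ c := by
  refine T.opNorm_le_bound hc fun x => ?_
  rcases eq_or_ne (T x) 0 with h0 | h0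
  · simp [h0, mul_nonneg hc (norm_nonneg x)]
  have key : ∀ y : E, ⟪T x, y⟫ ≤ c / 2 * (‖x‖ ^ 2 + ‖y‖ ^ 2) := by
    intro y
    have hs : ⟪T y, x⟫ = ⟪T x, y⟫ := by
      rw [hT.apply_clm y x, real_inner_comm]
    have e1 : ⟪T (x + y), x + y⟫ - ⟪T (x - y), x - y⟫ = 4 * ⟪T x, y⟫ := by
      simp only [map_add, map_sub, inner_add_left, inner_sub_left, inner_add_right,
        inner_sub_right]
      linarith
    have h1 := abs_le.1 (h (x + y))
    have h2 := abs_le.1 (h (x - y))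
    have hpar : ‖x + y‖ ^ 2 + ‖x - y‖ ^ 2 = 2 * (‖x‖ ^ 2 + ‖y‖ ^ 2) := by
      have := parallelogram_law_with_norm ℝ x y
      ring_nf at this ⊢; linarith
    nlinarith
  have hxne : x ≠ 0 := by rintro rfl; simp at h0
  set y := (‖x‖ / ‖T x‖) • T x with hy
  have hTxpos : (0:ℝ) < ‖T x‖ := norm_pos_iff.2 h0
  have hny : ‖y‖ = ‖x‖ := by
    rw [hy, norm_smul, Real.norm_eq_abs, abs_div, abs_of_nonneg (norm_nonneg x),
      abs_of_nonneg (norm_nonneg _), div_mul_cancel₀]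
    exact hTxpos.ne'
  have hinner : ⟪T x, y⟫ = ‖x‖ * ‖T x‖ := by
    rw [hy, real_inner_smul_right, real_inner_self_eq_norm_sq, sq]
    field_simp
  have := key y
  rw [hinner, hny] at this
  have hxpos : 0 < ‖x‖ := norm_pos_iff.2 hxne
  have h3 : ‖x‖ * ‖T x‖ ≤ c * ‖x‖ ^ 2 := by nlinarith
  nlinarith

/-- For a probability vector `π`, the spectral norm of
`diag(π) − π πᵀ` is at most `max_j π_j`. -/
theorem stmt19 (q : ℕ) (hq : 0 < q) (π : Fin q → ℝ)
    (hπ0 : ∀ j, 0 ≤ π j) (hπ1 : ∑ j, π j = 1) :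
    ‖Matrix.toEuclideanCLM (𝕜 := ℝ)
        (Matrix.diagonal π - Matrix.of (fun i j => π i * π j))‖
      ≤ Finset.univ.sup' ⟨⟨0, hq⟩, Finset.mem_univ _⟩ π := by
  set A : Matrix (Fin q) (Fin q) ℝ :=
    Matrix.diagonal π - Matrix.of (fun i j => π i * π j) with hA
  set c : ℝ := Finset.univ.sup' ⟨⟨0, hq⟩, Finset.mem_univ _⟩ π with hc
  have hcmem : ∀ j, π j ≤ c := fun j => Finset.le_sup' π (Finset.mem_univ j)
  have hc0 : 0 ≤ c := le_trans (hπ0 ⟨0, hq⟩) (hcmem ⟨0, hq⟩)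
  have hAherm : A.IsHermitian := by
    rw [hA]
    refine Matrix.IsHermitian.sub (Matrix.isHermitian_diagonal _) ?_
    ext i j
    simp [Matrix.conjTranspose_apply, mul_comm]
  set T := Matrix.toEuclideanCLM (𝕜 := ℝ) A with hT
  have hsa : IsSelfAdjoint T := by
    rw [hT]
    show star _ = _
    rw [← map_star]
    exact congrArg _ hAherm
  have hsym : LinearMap.IsSymmetric (T : EuclideanSpace ℝ (Fin q) →ₗ[ℝ] _) :=
    ContinuousLinearMap.isSelfAdjoint_iff_isSymmetric.mp hsa
  refine aux_norm_le T hsym hc0 fun x => ?_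
  have hTx : ∀ i, T x i = π i * x i - π i * ∑ j, π j * x j := by
    intro i
    have h1 := congrFun (Matrix.ofLp_toEuclideanCLM (𝕜 := ℝ) A x) i
    have : T x i = ∑ j, A i j * x j := by
      exact h1.trans rfl
    rw [this, hA]
    simp only [Matrix.sub_apply, Matrix.diagonal_apply, Matrix.of_apply, sub_mul,
      Finset.sum_sub_distrib, ite_mul, zero_mul, Finset.sum_ite_eq, Finset.mem_univ,
      if_true, Finset.mul_sum]
    congr 1
    exact Finset.sum_congr rfl fun j _ => by ring
  have hform : ⟪T x, x⟫ = (∑ j, π j * x j ^ 2) - (∑ j, π j * x j) ^ 2 := by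
    rw [PiLp.inner_apply]
    simp only [RCLike.inner_apply, starRingEnd_apply, star_trivial]
    have : ∀ i, T x i * x i = π i * x i ^ 2 - (π i * x i) * (∑ j, π j * x j) := by
      intro i; rw [hTx i]; ring
    calc ∑ i, x i * T x i
        = ∑ i, (π i * x i ^ 2 - (π i * x i) * (∑ j, π j * x j)) :=
          Finset.sum_congr rfl fun i _ => by rw [mul_comm]; exact this i
      _ = (∑ j, π j * x j ^ 2) - (∑ j, π j * x j) ^ 2 := by
          rw [Finset.sum_sub_distrib, ← Finset.sum_mul, sq]
  have hx2 : ‖x‖ ^ 2 = ∑ i, x i ^ 2 := by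
    rw [← real_inner_self_eq_norm_sq, PiLp.inner_apply]
    simp [RCLike.inner_apply, sq]
  have hCS : (∑ j, π j * x j) ^ 2 ≤ ∑ j, π j * x j ^ 2 := by
    have h1 : (∑ j, Real.sqrt (π j) * (Real.sqrt (π j) * x j)) ^ 2
        ≤ (∑ j, Real.sqrt (π j) ^ 2) * ∑ j, (Real.sqrt (π j) * x j) ^ 2 :=
      Finset.sum_mul_sq_le_sq_mul_sq _ _ _
    have e1 : ∀ j, Real.sqrt (π j) * (Real.sqrt (π j) * x j) = π j * x j := by
      intro j; rw [← mul_assoc, Real.mul_self_sqrt (hπ0 j)]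
    have e2 : ∀ j, Real.sqrt (π j) ^ 2 = π j := fun j => Real.sq_sqrt (hπ0 j)
    have e3 : ∀ j, (Real.sqrt (π j) * x j) ^ 2 = π j * x j ^ 2 := by
      intro j; rw [mul_pow, e2]
    simp only [Finset.sum_congr rfl fun j _ => e1 j, Finset.sum_congr rfl fun j _ => e2 j,
      Finset.sum_congr rfl fun j _ => e3 j] at h1
    simpa [hπ1] using h1
  have hupper : ∑ j, π j * x j ^ 2 ≤ c * ‖x‖ ^ 2 := by
    rw [hx2, Finset.mul_sum]
    exact Finset.sum_le_sum fun j _ => mul_le_mul_of_nonneg_right (hcmem j) (sq_nonneg _)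
  rw [hform, abs_of_nonneg (by linarith [hCS])]
  have : (0:ℝ) ≤ (∑ j, π j * x j) ^ 2 := sq_nonneg _
  linarith
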